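/- Let f : ℝ → TP^n be a tropical holomorphic curve and let V_P be a tropical hypersurface of degree d such that f(ℝ) ⊄ V_P. Then m_f(r, V_P) + N(r, 1₀⊘(P∘f)) = d·T_f(r) + O(1) as r → ∞. -/

import Mathlib

open Filter MeasureTheory Topology
open scoped Classical

noncomputable section

namespace TropNev

/-- `f` is tropical meromorphic: continuous and piecewise linear
(affine on a small interval on each side of every point). -/
def IsTropMero (f : ℝ → ℝ) : Prop :=
  Continuous f ∧ ∀ x : ℝ, ∃ ε > (0:ℝ), ∃ sR sL : ℝ,
    (∀ t ∈ Set.Icc x (x + ε), f t = f x + sR * (t - x)) ∧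
    (∀ t ∈ Set.Icc (x - ε) x, f t = f x + sL * (t - x))

/-- ω_f(x): right derivative minus left derivative. -/
def omega (f : ℝ → ℝ) (x : ℝ) : ℝ :=
  derivWithin f (Set.Ici x) x - derivWithin f (Set.Iic x) x

/-- tropical entire: tropical meromorphic with no poles. -/
def IsTropEntire (f : ℝ → ℝ) : Prop :=
  IsTropMero f ∧ ∀ x : ℝ, 0 ≤ omega f x

/-- tropical proximity function m(r,f). -/
def prox (f : ℝ → ℝ) (r : ℝ) : ℝ := (max (f r) 0 + max (f (-r)) 0) / 2

/-- tropical counting function of poles N(r,f). -/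
def countN (f : ℝ → ℝ) (r : ℝ) : ℝ :=
  (1 / 2) * ∑' b : ℝ, if |b| < r ∧ omega f b < 0 then -omega f b * (r - |b|) else 0

/-- N(r, 1₀ ⊘ g): counting function of the roots of g. -/
def countNroots (g : ℝ → ℝ) (r : ℝ) : ℝ := countN (fun x => -g x) r

/-- tropical Nevanlinna characteristic T(r,f). -/
def charT (f : ℝ → ℝ) (r : ℝ) : ℝ := prox f r + countN f r

/-- limsup_{r→∞} h(r) = 0 (in the real-analysis sense). -/
def LimsupZero (h : ℝ → ℝ) : Prop :=
  (∀ ε : ℝ, 0 < ε → ∀ᶠ r : ℝ in atTop, h r < ε) ∧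
  (∀ ε : ℝ, 0 < ε → ∃ᶠ r : ℝ in atTop, -ε < h r)

/-- liminf_{r→∞} h(r) = 0 (in the real-analysis sense). -/
def LiminfZero (h : ℝ → ℝ) : Prop :=
  (∀ ε : ℝ, 0 < ε → ∃ᶠ r : ℝ in atTop, h r < ε) ∧
  (∀ ε : ℝ, 0 < ε → ∀ᶠ r : ℝ in atTop, -ε < h r)

/-- E ⊆ [1,∞) has zero upper density. -/
def ZeroUpperDensity (E : Set ℝ) : Prop :=
  LimsupZero fun r => (volume (E ∩ Set.Icc 1 r)).toReal / r

/-- E ⊆ [1,∞) has zero lower density. -/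
def ZeroLowerDensity (E : Set ℝ) : Prop :=
  LiminfZero fun r => (volume (E ∩ Set.Icc 1 r)).toReal / r

/-- max of finitely many reals. -/
def tmax {m : ℕ} (F : Fin (m + 1) → ℝ) : ℝ :=
  Finset.univ.sup' Finset.univ_nonempty F

/-- tropical holomorphic curve with reduced representation f₀,…,f_n :
all components tropical entire, with no common roots. -/
def IsTropCurve {n : ℕ} (f : Fin (n + 1) → ℝ → ℝ) : Prop :=
  (∀ k, IsTropEntire (f k)) ∧ ∀ x : ℝ, ∃ k, ¬ 0 < omega (f k) x

/-- tropical Cartan characteristic T_f(r). -/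
def curveT {n : ℕ} (f : Fin (n + 1) → ℝ → ℝ) (r : ℝ) : ℝ :=
  (tmax (fun k => f k r) + tmax (fun k => f k (-r))) / 2 - tmax fun k => f k 0

/-- homogeneous tropical polynomial of degree d in the variables x₀,…,x_n,
with coefficients in ℝ ∪ {−∞} indexed by the degree-d monomials
(i.e. multisets of size d over the variables), not all −∞. -/
structure TropPoly (n d : ℕ) where
  coeff : Sym (Fin (n + 1)) d → EReal
  nontriv : ∃ s, coeff s ≠ ⊥

/-- value of the monomial term c_I + i₀x₀+⋯+i_nx_n. -/
def TropPoly.term {n d : ℕ} (P : TropPoly n d) (s : Sym (Fin (n + 1)) d)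
    (x : Fin (n + 1) → ℝ) : EReal :=
  P.coeff s + (((Multiset.map x (s : Multiset (Fin (n + 1)))).sum : ℝ) : EReal)

def TropPoly.evalE {n d : ℕ} (P : TropPoly n d) (x : Fin (n + 1) → ℝ) : EReal :=
  Finset.univ.sup fun s => P.term s x

/-- the tropical hypersurface V_P : points where the maximum is attained
by at least two monomials. -/
def TropPoly.hyp {n d : ℕ} (P : TropPoly n d) : Set (Fin (n + 1) → ℝ) :=
  {x | ∃ s t : Sym (Fin (n + 1)) d, s ≠ t ∧
        P.term s x = P.evalE x ∧ P.term t x = P.evalE x}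

/-- the composition P ∘ f. -/
def TropPoly.compo {n d : ℕ} (P : TropPoly n d) (f : Fin (n + 1) → ℝ → ℝ) : ℝ → ℝ :=
  fun t => (P.evalE fun k => f k t).toReal

/-- ‖a‖ = max_I c_I for the coefficient vector of P. -/
def TropPoly.coeffNorm {n d : ℕ} (P : TropPoly n d) : ℝ :=
  (Finset.univ.sup fun s => P.coeff s).toReal

/-- tropical Weil function λ_{V_P}(f(x)) = d‖f(x)‖ + d‖a‖ − (P∘f)(x). -/
def weil {n d : ℕ} (P : TropPoly n d) (f : Fin (n + 1) → ℝ → ℝ) (x : ℝ) : ℝ :=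
  d * tmax (fun k => f k x) + d * P.coeffNorm - P.compo f x

/-- proximity function m_f(r, V_P). -/
def proxCurve {n d : ℕ} (f : Fin (n + 1) → ℝ → ℝ) (P : TropPoly n d) (r : ℝ) : ℝ :=
  (weil P f r + weil P f (-r)) / 2

/-- f is tropical algebraically nondegenerate. -/
def AlgNondeg {n : ℕ} (f : Fin (n + 1) → ℝ → ℝ) : Prop :=
  ∀ d : ℕ, 1 ≤ d → ∀ P : TropPoly n d, ∃ t : ℝ, (fun k => f k t) ∉ P.hyp

/-- f is tropical linearly nondegenerate. -/
def LinNondeg {n : ℕ} (f : Fin (n + 1) → ℝ → ℝ) : Prop :=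
  ∀ P : TropPoly n 1, ∃ t : ℝ, (fun k => f k t) ∉ P.hyp

/-- Gondran–Minoux linear independence of a finite family of real functions. -/
def GMLinIndep {ι : Type*} [Fintype ι] [DecidableEq ι] (g : ι → ℝ → ℝ) : Prop :=
  ¬ ∃ (I J : Finset ι) (a : ι → EReal),
      I.Nonempty ∧ J.Nonempty ∧ Disjoint I J ∧ I ∪ J = Finset.univ ∧
      (∃ i, a i ≠ ⊥) ∧
      ∀ x : ℝ, (I.sup fun i => a i + ((g i x : ℝ) : EReal)) =
        (J.sup fun j => a j + ((g j x : ℝ) : EReal))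

/-- the degree-d tropical monomials f^I in f₀,…,f_n. -/
def monos {n : ℕ} (f : Fin (n + 1) → ℝ → ℝ) (d : ℕ) :
    Sym (Fin (n + 1)) d → ℝ → ℝ :=
  fun s x => (Multiset.map (fun k => f k x) (s : Multiset (Fin (n + 1)))).sum

/-- Gondran–Minoux algebraic independence. -/
def GMAlgIndep {n : ℕ} (f : Fin (n + 1) → ℝ → ℝ) : Prop :=
  ∀ d : ℕ, 1 ≤ d → GMLinIndep (monos f d)

/-- F is a complete tropical linear combination of the family h :
every tropical-linear representation of F over h has all coefficients finite. -/
def TropComplete {ι : Type*} [Fintype ι] (h : ι → ℝ → ℝ) (F : ℝ → ℝ) : Prop :=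
  ∀ a : ι → EReal,
    (∀ x : ℝ, ((F x : ℝ) : EReal) = Finset.univ.sup fun k => a k + ((h k x : ℝ) : EReal)) →
    ∀ k, a k ≠ ⊥

/-- the tropical Casoratian with shift c. -/
def casorati {m : ℕ} (c : ℝ) (g : Fin (m + 1) → ℝ → ℝ) : ℝ → ℝ := fun x =>
  Finset.univ.sup' Finset.univ_nonempty
    fun π : Equiv.Perm (Fin (m + 1)) => ∑ j, g j (x + ((π j : ℕ) : ℝ) * c)

/-- tropical Cartan characteristic for a reduced representation [f₀:f₁] in TP¹. -/
def charT2 (f0 f1 : ℝ → ℝ) (r : ℝ) : ℝ :=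
  (max (f0 r) (f1 r) + max (f0 (-r)) (f1 (-r))) / 2 - max (f0 0) (f1 0)

/-- reduced representation in TP¹: f₀, f₁ tropical entire with no common roots. -/
def ReducedPair (f0 f1 : ℝ → ℝ) : Prop :=
  IsTropEntire f0 ∧ IsTropEntire f1 ∧ ∀ x : ℝ, ¬ (0 < omega f0 x ∧ 0 < omega f1 x)

/-- (P∘f)(x) = max(a₀+f₀(x), a₁+f₁(x)) for a TP¹ value [a₁:a₀]. -/
def pcomp (a0 a1 : EReal) (f0 f1 : ℝ → ℝ) : ℝ → ℝ := fun x =>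
  ((a0 + ((f0 x : ℝ) : EReal)) ⊔ (a1 + ((f1 x : ℝ) : EReal))).toReal

/-- defect of a tropical holomorphic curve with respect to a tropical hypersurface. -/
def curveDefect {n d : ℕ} (f : Fin (n + 1) → ℝ → ℝ) (P : TropPoly n d) : ℝ :=
  1 - Filter.limsup (fun r => countNroots (P.compo f) r / (d * curveT f r)) atTop

end TropNev

end

open Set Filter TropNev

noncomputable section

namespace TropAux

noncomputable def sR (g : ℝ → ℝ) (x : ℝ) : ℝ := derivWithin g (Set.Ici x) x
noncomputable def sL (g : ℝ → ℝ) (x : ℝ) : ℝ := derivWithin g (Set.Iic x) x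

lemma omega_eq (g : ℝ → ℝ) (x : ℝ) : omega g x = sR g x - sL g x := rfl

lemma slopeR_eq {g : ℝ → ℝ} {x ε s : ℝ} (hε : 0 < ε)
    (h : ∀ t ∈ Icc x (x + ε), g t = g x + s * (t - x)) : sR g x = s := by
  have hmem : Icc x (x + ε) ∈ nhdsWithin x (Ici x) :=
    Icc_mem_nhdsGE_of_mem (by constructor <;> [exact le_rfl; linarith])
  have heq : g =ᶠ[nhdsWithin x (Ici x)] (fun t => g x + s * (t - x)) :=
    eventually_of_mem hmem h
  have hx : g x = g x + s * (x - x) := by ring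
  have hd : HasDerivWithinAt (fun t : ℝ => g x + s * (t - x)) s (Ici x) x := by
    simpa using (((hasDerivAt_id x).sub_const x).const_mul s).const_add (g x) |>.hasDerivWithinAt
  have := heq.derivWithin_eq hx
  rw [sR, this, hd.derivWithin (uniqueDiffOn_Ici x x self_mem_Ici)]

lemma slopeL_eq {g : ℝ → ℝ} {x ε s : ℝ} (hε : 0 < ε)
    (h : ∀ t ∈ Icc (x - ε) x, g t = g x + s * (t - x)) : sL g x = s := by
  have hmem : Icc (x - ε) x ∈ nhdsWithin x (Iic x) :=
    Icc_mem_nhdsLE_of_mem (by constructor <;> linarith)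
  have heq : g =ᶠ[nhdsWithin x (Iic x)] (fun t => g x + s * (t - x)) :=
    eventually_of_mem hmem h
  have hx : g x = g x + s * (x - x) := by ring
  have hd : HasDerivWithinAt (fun t : ℝ => g x + s * (t - x)) s (Iic x) x := by
    simpa using (((hasDerivAt_id x).sub_const x).const_mul s).const_add (g x) |>.hasDerivWithinAt
  have := heq.derivWithin_eq hx
  rw [sL, this, hd.derivWithin (uniqueDiffOn_Iic x x self_mem_Iic)]

/-- normalization: a tropical meromorphic function is affine with slopes `sR`, `sL`
on a small interval on each side. -/
lemma norm_mero {g : ℝ → ℝ} (hg : IsTropMero g) (x : ℝ) :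
    ∃ ε > (0:ℝ), (∀ t ∈ Icc x (x + ε), g t = g x + sR g x * (t - x)) ∧
      (∀ t ∈ Icc (x - ε) x, g t = g x + sL g x * (t - x)) := by
  obtain ⟨ε, hε, A, B, hA, hB⟩ := hg.2 x
  exact ⟨ε, hε, by rw [slopeR_eq hε hA]; exact hA, by rw [slopeL_eq hε hB]; exact hB⟩

lemma entire_of {g : ℝ → ℝ} (hc : Continuous g)
    (h : ∀ x : ℝ, ∃ ε > (0:ℝ), ∃ A B : ℝ, B ≤ A ∧
      (∀ t ∈ Icc x (x + ε), g t = g x + A * (t - x)) ∧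
      (∀ t ∈ Icc (x - ε) x, g t = g x + B * (t - x))) : IsTropEntire g := by
  refine ⟨⟨hc, fun x => ?_⟩, fun x => ?_⟩
  · obtain ⟨ε, hε, A, B, _, hA, hB⟩ := h x; exact ⟨ε, hε, A, B, hA, hB⟩
  · obtain ⟨ε, hε, A, B, hBA, hA, hB⟩ := h x
    rw [omega_eq, slopeR_eq hε hA, slopeL_eq hε hB]
    linarith

lemma slopes_le {g : ℝ → ℝ} (hg : IsTropEntire g) (x : ℝ) : sL g x ≤ sR g x := by
  have := hg.2 x; rw [omega_eq] at this; linarith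

lemma entire_const (c : ℝ) : IsTropEntire (fun _ : ℝ => c) := by
  refine entire_of continuous_const (fun x => ⟨1, one_pos, 0, 0, le_rfl, ?_, ?_⟩) <;>
    · intro t _; ring

lemma entire_add {f g : ℝ → ℝ} (hf : IsTropEntire f) (hg : IsTropEntire g) :
    IsTropEntire (fun x => f x + g x) := by
  refine entire_of (hf.1.1.add hg.1.1) (fun x => ?_)
  obtain ⟨εf, hεf, hfr, hfl⟩ := norm_mero hf.1 x
  obtain ⟨εg, hεg, hgr, hgl⟩ := norm_mero hg.1 x
  refine ⟨min εf εg, lt_min hεf hεg, sR f x + sR g x, sL f x + sL g x,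
    add_le_add (slopes_le hf x) (slopes_le hg x), fun t ht => ?_, fun t ht => ?_⟩
  · obtain ⟨h1, h2⟩ := ht
    rw [hfr t ⟨h1, by have := min_le_left εf εg; linarith⟩,
        hgr t ⟨h1, by have := min_le_right εf εg; linarith⟩]; ring
  · obtain ⟨h1, h2⟩ := ht
    rw [hfl t ⟨by have := min_le_left εf εg; linarith, h2⟩,
        hgl t ⟨by have := min_le_right εf εg; linarith, h2⟩]; ring

lemma entire_const_add {f : ℝ → ℝ} (c : ℝ) (hf : IsTropEntire f) :
    IsTropEntire (fun x => c + f x) := entire_add (entire_const c) hf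

lemma max_mul_nonneg {a b u : ℝ} (hu : 0 ≤ u) (p : ℝ) :
    max (p + a * u) (p + b * u) = p + max a b * u := by
  rcases le_total a b with h | h
  · rw [max_eq_right (by nlinarith), max_eq_right h]
  · rw [max_eq_left (by nlinarith), max_eq_left h]

lemma max_mul_nonpos {a b u : ℝ} (hu : u ≤ 0) (p : ℝ) :
    max (p + a * u) (p + b * u) = p + min a b * u := by
  rcases le_total a b with h | h
  · rw [max_eq_left (by nlinarith), min_eq_left h]
  · rw [max_eq_right (by nlinarith), min_eq_right h]

end TropAux

end
open Set Filter TropNev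

noncomputable section
namespace TropAux

/-- local description of the max when `f x < g x`. -/
lemma max_loc_lt {f g : ℝ → ℝ} (hf : IsTropMero f) (hg : IsTropMero g) {x : ℝ}
    (hlt : f x < g x) (hog : sL g x ≤ sR g x) :
    ∃ ε > (0:ℝ), ∃ A B : ℝ, B ≤ A ∧
      (∀ t ∈ Icc x (x + ε), max (f t) (g t) = max (f x) (g x) + A * (t - x)) ∧
      (∀ t ∈ Icc (x - ε) x, max (f t) (g t) = max (f x) (g x) + B * (t - x)) := by
  obtain ⟨εg, hεg, hgr, hgl⟩ := norm_mero hg x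
  have hopen : IsOpen {t : ℝ | f t < g t} := isOpen_lt hf.1 hg.1
  obtain ⟨δ, hδ, hball⟩ := Metric.isOpen_iff.1 hopen x hlt
  set ε := min εg (δ / 2) with hε
  have hε0 : 0 < ε := lt_min hεg (by linarith)
  have hfg : ∀ t, |t - x| ≤ ε → f t < g t := by
    intro t ht
    apply hball
    rw [Metric.mem_ball, Real.dist_eq]
    have h2 : ε ≤ δ / 2 := min_le_right _ _
    linarith
  have hmx : max (f x) (g x) = g x := max_eq_right hlt.le
  refine ⟨ε, hε0, sR g x, sL g x, hog, fun t ht => ?_, fun t ht => ?_⟩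
  · obtain ⟨h1, h2⟩ := ht
    rw [max_eq_right (hfg t (by rw [abs_le]; constructor <;> linarith)).le, hmx,
      hgr t ⟨h1, by have := min_le_left εg (δ/2); linarith⟩]
  · obtain ⟨h1, h2⟩ := ht
    rw [max_eq_right (hfg t (by rw [abs_le]; constructor <;> [linarith [min_le_left εg (δ/2)]; linarith])).le,
      hmx, hgl t ⟨by have := min_le_left εg (δ/2); linarith, h2⟩]

lemma entire_max {f g : ℝ → ℝ} (hf : IsTropEntire f) (hg : IsTropEntire g) :
    IsTropEntire (fun x => max (f x) (g x)) := by
  refine entire_of (hf.1.1.max hg.1.1) (fun x => ?_)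
  rcases lt_trichotomy (f x) (g x) with h | h | h
  · exact max_loc_lt hf.1 hg.1 h (slopes_le hg x)
  · obtain ⟨εf, hεf, hfr, hfl⟩ := norm_mero hf.1 x
    obtain ⟨εg, hεg, hgr, hgl⟩ := norm_mero hg.1 x
    refine ⟨min εf εg, lt_min hεf hεg, max (sR f x) (sR g x), min (sL f x) (sL g x),
      le_trans (le_trans (min_le_left _ _) (slopes_le hf x)) (le_max_left _ _),
      fun t ht => ?_, fun t ht => ?_⟩
    · obtain ⟨h1, h2⟩ := ht
      rw [hfr t ⟨h1, by have := min_le_left εf εg; linarith⟩,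
          hgr t ⟨h1, by have := min_le_right εf εg; linarith⟩, ← h,
          max_mul_nonneg (by linarith) (f x), max_self]
    · obtain ⟨h1, h2⟩ := ht
      rw [hfl t ⟨by have := min_le_left εf εg; linarith, h2⟩,
          hgl t ⟨by have := min_le_right εf εg; linarith, h2⟩, ← h,
          max_mul_nonpos (by linarith) (f x), max_self]
  · obtain ⟨ε, hε, A, B, hBA, h1, h2⟩ := max_loc_lt hg.1 hf.1 h (slopes_le hf x)
    refine ⟨ε, hε, A, B, hBA, fun t ht => ?_, fun t ht => ?_⟩
    · rw [max_comm (f t) (g t), max_comm (f x) (g x)]; exact h1 t ht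
    · rw [max_comm (f t) (g t), max_comm (f x) (g x)]; exact h2 t ht

lemma entire_sup' {ι : Type*} (S : Finset ι) (hS : S.Nonempty) (G : ι → ℝ → ℝ)
    (h : ∀ i ∈ S, IsTropEntire (G i)) :
    IsTropEntire (fun x => S.sup' hS fun i => G i x) := by
  classical
  revert hS h
  induction S using Finset.induction_on with
  | empty => intro hS _; exact absurd hS (by simp)
  | @insert a s ha ih =>
      intro hS h
      by_cases hs : s.Nonempty
      · have e : ∀ x, ((insert a s).sup' hS fun i => G i x)
            = max (G a x) (s.sup' hs fun i => G i x) := fun x => by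
          rw [Finset.sup'_insert hs]
        simp only [e]
        exact entire_max (h a (Finset.mem_insert_self a s))
          (ih hs fun i hi => h i (Finset.mem_insert_of_mem hi))
      · have hse : s = ∅ := Finset.not_nonempty_iff_eq_empty.1 hs
        subst hse
        have e : ∀ x, ((insert a (∅:Finset ι)).sup' hS fun i => G i x) = G a x := fun x => by
          simp
        simp only [e]
        exact h a (Finset.mem_insert_self a ∅)

lemma entire_msum {n : ℕ} {f : Fin (n + 1) → ℝ → ℝ} (hf : ∀ k, IsTropEntire (f k))
    (m : Multiset (Fin (n + 1))) :
    IsTropEntire (fun x => (Multiset.map (fun k => f k x) m).sum) := by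
  induction m using Multiset.induction_on with
  | empty => simpa using entire_const 0
  | cons a m ih =>
      simp only [Multiset.map_cons, Multiset.sum_cons]
      exact entire_add (hf a) ih

end TropAux
end
open Set Filter TropNev

noncomputable section
namespace TropAux

lemma affine_of_no_break {g : ℝ → ℝ} (hg : IsTropMero g) {u v : ℝ} (huv : u < v)
    (hnb : ∀ c, u < c → c < v → omega g c = 0) :
    (∀ w ∈ Icc u v, g w = g u + sR g u * (w - u)) ∧ sL g v = sR g u := by
  set s := sR g u with hs
  set A : Set ℝ := {t | t ∈ Icc u v ∧ ∀ w ∈ Icc u t, g w = g u + s * (w - u)} with hA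
  have huA : u ∈ A := by
    refine ⟨⟨le_rfl, huv.le⟩, fun w hw => ?_⟩
    have hwu : w = u := le_antisymm hw.2 hw.1
    rw [hwu]; ring
  have hne : A.Nonempty := ⟨u, huA⟩
  have hbdd : BddAbove A := ⟨v, fun t ht => ht.1.2⟩
  set T := sSup A with hT
  have hTu : u ≤ T := le_csSup hbdd huA
  have hTv : T ≤ v := csSup_le hne (fun t ht => ht.1.2)
  have hIco : ∀ w ∈ Ico u T, g w = g u + s * (w - u) := by
    intro w hw
    obtain ⟨t, htA, hwt⟩ := exists_lt_of_lt_csSup hne hw.2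
    exact htA.2 w ⟨hw.1, hwt.le⟩
  have hgT : g T = g u + s * (T - u) := by
    rcases eq_or_lt_of_le hTu with hu | hu
    · rw [← hu]; ring
    · have hclosed : IsClosed {x : ℝ | g x = g u + s * (x - u)} :=
        isClosed_eq hg.1 (continuous_const.add (continuous_const.mul (continuous_id.sub continuous_const)))
      have hsub : Ico u T ⊆ {x : ℝ | g x = g u + s * (x - u)} := hIco
      have hcl : T ∈ closure (Ico u T) := by
        rw [closure_Ico (ne_of_lt hu)]; exact ⟨hTu, le_rfl⟩
      exact hclosed.closure_subset ((closure_mono hsub) hcl)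
  have hAT : ∀ w ∈ Icc u T, g w = g u + s * (w - u) := by
    intro w hw
    rcases lt_or_eq_of_le hw.2 with hlt | heq
    · exact hIco w ⟨hw.1, hlt⟩
    · rw [heq]; exact hgT
  have hTveq : T = v := by
    by_contra hne'
    have hTltv : T < v := lt_of_le_of_ne hTv hne'
    have hsRT : sR g T = s := by
      rcases eq_or_lt_of_le hTu with hu | hu
      · rw [← hu]
      · obtain ⟨ε, hε, hr, hl⟩ := norm_mero hg T
        set t0 := max u (T - ε) with ht0def
        have ht0 : t0 < T := max_lt hu (by linarith)
        have h1 : g t0 = g T + sL g T * (t0 - T) :=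
          hl t0 ⟨le_max_right _ _, ht0.le⟩
        have h2 : g t0 = g u + s * (t0 - u) := hAT t0 ⟨le_max_left _ _, ht0.le⟩
        have hsl : sL g T = s := by
          have hne0 : t0 - T ≠ 0 := sub_ne_zero.2 ht0.ne
          have h4 : sL g T * (t0 - T) = s * (t0 - T) := by
            rw [hgT] at h1; linarith
          exact mul_right_cancel₀ hne0 h4
        have hω := hnb T hu hTltv
        rw [omega_eq, hsl] at hω; linarith
    obtain ⟨ε, hε, hr, _⟩ := norm_mero hg T
    set T' := min (T + ε) v with hT'def
    have hT'T : T < T' := lt_min (by linarith) hTltv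
    have hT'A : T' ∈ A := by
      refine ⟨⟨by linarith, min_le_right _ _⟩, fun w hw => ?_⟩
      rcases le_total w T with hwT | hwT
      · exact hAT w ⟨hw.1, hwT⟩
      · have hw2 : g w = g T + sR g T * (w - T) :=
          hr w ⟨hwT, le_trans hw.2 (min_le_left _ _)⟩
        rw [hw2, hsRT, hgT]; ring
    have := le_csSup hbdd hT'A
    linarith
  rw [hTveq] at hAT
  refine ⟨hAT, ?_⟩
  have hεv : (0:ℝ) < v - u := by linarith
  apply slopeL_eq hεv
  intro t ht
  have ht' : t ∈ Icc u v := by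
    constructor
    · have := ht.1; linarith
    · exact ht.2
  rw [hAT t ht', hAT v ⟨huv.le, le_rfl⟩]; ring

lemma sum_breaks_aux {g : ℝ → ℝ} (hg : IsTropMero g) (v : ℝ) :
    ∀ (N : ℕ) (u : ℝ) (F : Finset ℝ), F.card ≤ N → u < v →
      (∀ b : ℝ, b ∈ F ↔ (u < b ∧ b < v ∧ omega g b ≠ 0)) →
      g v = g u + sR g u * (v - u) + ∑ b ∈ F, omega g b * (v - b) := by
  intro N
  induction N with
  | zero =>
      intro u F hcard huv hF
      have hFe : F = ∅ := Finset.card_eq_zero.1 (Nat.le_zero.1 hcard)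
      subst hFe
      have hnb : ∀ c, u < c → c < v → omega g c = 0 := by
        intro c h1 h2
        by_contra hc
        exact absurd ((hF c).2 ⟨h1, h2, hc⟩) (by simp)
      have := (affine_of_no_break hg huv hnb).1 v ⟨huv.le, le_rfl⟩
      simpa using this
  | succ N ih =>
      intro u F hcard huv hF
      rcases Finset.eq_empty_or_nonempty F with hFe | hFne
      · subst hFe
        have hnb : ∀ c, u < c → c < v → omega g c = 0 := by
          intro c h1 h2
          by_contra hc
          exact absurd ((hF c).2 ⟨h1, h2, hc⟩) (by simp)
        have := (affine_of_no_break hg huv hnb).1 v ⟨huv.le, le_rfl⟩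
        simpa using this
      · set b := F.min' hFne with hbdef
        have hbF : b ∈ F := F.min'_mem hFne
        obtain ⟨hub, hbv, hωb⟩ := (hF b).1 hbF
        have hnb : ∀ c, u < c → c < b → omega g c = 0 := by
          intro c h1 h2
          by_contra hc
          have hcF : c ∈ F := (hF c).2 ⟨h1, h2.trans hbv, hc⟩
          have := F.min'_le c hcF
          rw [← hbdef] at this; linarith
        obtain ⟨haff, hsl⟩ := affine_of_no_break hg hub hnb
        have hgb : g b = g u + sR g u * (b - u) := haff b ⟨hub.le, le_rfl⟩
        have hsRb : sR g b = sR g u + omega g b := by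
          rw [omega_eq, hsl]; ring
        have hcard' : (F.erase b).card ≤ N := by
          rw [Finset.card_erase_of_mem hbF]
          omega
        have hchar : ∀ c : ℝ, c ∈ F.erase b ↔ (b < c ∧ c < v ∧ omega g c ≠ 0) := by
          intro c
          constructor
          · intro hc
            obtain ⟨hcne, hcF⟩ := Finset.mem_erase.1 hc
            obtain ⟨h1, h2, h3⟩ := (hF c).1 hcF
            have hbc : b ≤ c := F.min'_le c hcF
            exact ⟨lt_of_le_of_ne hbc (Ne.symm hcne), h2, h3⟩
          · rintro ⟨h1, h2, h3⟩
            exact Finset.mem_erase.2 ⟨ne_of_gt h1, (hF c).2 ⟨hub.trans h1, h2, h3⟩⟩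
        have hrec := ih b (F.erase b) hcard' hbv hchar
        have hsum : ∑ c ∈ F, omega g c * (v - c)
            = omega g b * (v - b) + ∑ c ∈ F.erase b, omega g c * (v - c) :=
          (Finset.add_sum_erase F _ hbF).symm
        rw [hsum, hrec, hgb, hsRb]; ring

lemma sum_breaks {g : ℝ → ℝ} (hg : IsTropMero g) {u v : ℝ} (huv : u < v) (F : Finset ℝ)
    (hF : ∀ b : ℝ, b ∈ F ↔ (u < b ∧ b < v ∧ omega g b ≠ 0)) :
    g v = g u + sR g u * (v - u) + ∑ b ∈ F, omega g b * (v - b) :=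
  sum_breaks_aux hg v F.card u F le_rfl huv hF

lemma omega_zero_of_affine {g : ℝ → ℝ} {a b A C : ℝ} (h : ∀ t ∈ Icc a b, g t = C + A * t)
    {y : ℝ} (hy : y ∈ Ioo a b) : omega g y = 0 := by
  obtain ⟨h1, h2⟩ := hy
  set δ := min (b - y) (y - a) with hδdef
  have hδ : 0 < δ := lt_min (by linarith) (by linarith)
  have hδ1 : δ ≤ b - y := min_le_left _ _
  have hδ2 : δ ≤ y - a := min_le_right _ _
  have hy' : g y = C + A * y := h y ⟨h1.le, h2.le⟩
  have hsR : sR g y = A := by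
    apply slopeR_eq hδ
    intro t ht
    rw [h t ⟨by linarith [ht.1], by linarith [ht.2]⟩, hy']; ring
  have hsL : sL g y = A := by
    apply slopeL_eq hδ
    intro t ht
    rw [h t ⟨by linarith [ht.1], by linarith [ht.2]⟩, hy']; ring
  rw [omega_eq, hsR, hsL]; ring

lemma finite_breaks {g : ℝ → ℝ} (hg : IsTropMero g) (r : ℝ) :
    {b : ℝ | |b| ≤ r ∧ omega g b ≠ 0}.Finite := by
  have H := norm_mero hg
  choose ε hε hr hl using H
  set U : ℝ → Set ℝ := fun x => Ioo (x - ε x) (x + ε x) with hU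
  have hzero : ∀ x y : ℝ, y ∈ U x → y ≠ x → omega g y = 0 := by
    intro x y hy hyx
    rcases lt_or_gt_of_ne hyx with hlt | hgt
    · refine omega_zero_of_affine (a := x - ε x) (b := x) (A := sL g x)
        (C := g x - sL g x * x) (fun t ht => ?_) ⟨hy.1, hlt⟩
      rw [hl x t ht]; ring
    · refine omega_zero_of_affine (a := x) (b := x + ε x) (A := sR g x)
        (C := g x - sR g x * x) (fun t ht => ?_) ⟨hgt, hy.2⟩
      rw [hr x t ht]; ring
  have hcover : Icc (-r) r ⊆ ⋃ x : ℝ, U x := by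
    intro y _
    exact mem_iUnion.2 ⟨y, by constructor <;> [linarith [hε y]; linarith [hε y]]⟩
  obtain ⟨t, ht⟩ := isCompact_Icc.elim_finite_subcover U (fun x => isOpen_Ioo) hcover
  refine Set.Finite.subset t.finite_toSet (fun b hb => ?_)
  obtain ⟨hbr, hbω⟩ := hb
  have hbmem : b ∈ Icc (-r) r := by
    obtain ⟨h1, h2⟩ := abs_le.1 hbr; exact ⟨h1, h2⟩
  obtain ⟨x, hxt, hbx⟩ := Set.mem_iUnion₂.1 (ht hbmem)
  by_cases hbxeq : b = x
  · rw [hbxeq]; exact hxt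
  · exact absurd (hzero x b hbx hbxeq) hbω

end TropAux
end
open Set Filter TropNev

noncomputable section
namespace TropAux

lemma reflect_sR {g : ℝ → ℝ} (hg : IsTropMero g) (x : ℝ) :
    sR (fun t => g (-t)) x = - sL g (-x) := by
  obtain ⟨ε, hε, _, hl⟩ := norm_mero hg (-x)
  apply slopeR_eq hε
  intro t ht
  rw [show g (-t) = g (-x) + sL g (-x) * (-t - -x) from
    hl (-t) ⟨by linarith [ht.2], by linarith [ht.1]⟩]
  ring

lemma reflect_sL {g : ℝ → ℝ} (hg : IsTropMero g) (x : ℝ) :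
    sL (fun t => g (-t)) x = - sR g (-x) := by
  obtain ⟨ε, hε, hr, _⟩ := norm_mero hg (-x)
  apply slopeL_eq hε
  intro t ht
  rw [show g (-t) = g (-x) + sR g (-x) * (-t - -x) from
    hr (-t) ⟨by linarith [ht.2], by linarith [ht.1]⟩]
  ring

lemma mero_reflect {g : ℝ → ℝ} (hg : IsTropMero g) : IsTropMero (fun t => g (-t)) := by
  refine ⟨hg.1.comp continuous_neg, fun x => ?_⟩
  obtain ⟨ε, hε, hr, hl⟩ := norm_mero hg (-x)
  refine ⟨ε, hε, - sL g (-x), - sR g (-x), fun t ht => ?_, fun t ht => ?_⟩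
  · show g (-t) = g (-x) + - sL g (-x) * (t - x)
    rw [hl (-t) ⟨by linarith [ht.2], by linarith [ht.1]⟩]
    ring
  · show g (-t) = g (-x) + - sR g (-x) * (t - x)
    rw [hr (-t) ⟨by linarith [ht.2], by linarith [ht.1]⟩]
    ring

lemma omega_reflect {g : ℝ → ℝ} (hg : IsTropMero g) (x : ℝ) :
    omega (fun t => g (-t)) x = omega g (-x) := by
  rw [omega_eq, reflect_sR hg, reflect_sL hg, omega_eq]; ring

lemma omega_neg_mero {g : ℝ → ℝ} (hg : IsTropMero g) (b : ℝ) :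
    omega (fun x => -g x) b = - omega g b := by
  obtain ⟨ε, hε, hr, hl⟩ := norm_mero hg b
  have h1 : sR (fun t => -g t) b = - sR g b :=
    slopeR_eq hε (fun t ht => by rw [hr t ht]; ring)
  have h2 : sL (fun t => -g t) b = - sL g b :=
    slopeL_eq hε (fun t ht => by rw [hl t ht]; ring)
  rw [omega_eq, h1, h2, omega_eq]; ring

lemma jensen {g : ℝ → ℝ} (hg : IsTropEntire g) {r : ℝ} (hr : 0 < r) :
    countNroots g r = (g r + g (-r)) / 2 - g 0 := by
  classical
  have hgm := hg.1
  have h1 : countNroots g r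
      = (1/2) * ∑' b : ℝ, (if |b| < r ∧ 0 < omega g b then omega g b * (r - |b|) else 0) := by
    rw [countNroots, countN]
    congr 1
    apply tsum_congr
    intro b
    rw [omega_neg_mero hgm b]
    simp [neg_lt_zero]
  set B := (finite_breaks hgm r).toFinset with hBdef
  have hmemB : ∀ b : ℝ, b ∈ B ↔ (|b| ≤ r ∧ omega g b ≠ 0) := fun b =>
    (finite_breaks hgm r).mem_toFinset
  have hsupp : ∀ b ∉ B, (if |b| < r ∧ 0 < omega g b then omega g b * (r - |b|) else 0) = 0 := by
    intro b hb
    rw [if_neg]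
    rintro ⟨hlt, hpos⟩
    exact hb ((hmemB b).2 ⟨hlt.le, ne_of_gt hpos⟩)
  rw [h1, tsum_eq_sum hsupp]
  have hite : ∀ b ∈ B, (if |b| < r ∧ 0 < omega g b then omega g b * (r - |b|) else 0)
      = omega g b * (r - |b|) := by
    intro b hb
    obtain ⟨hble, hωne⟩ := (hmemB b).1 hb
    have hωpos : 0 < omega g b := lt_of_le_of_ne (hg.2 b) (Ne.symm hωne)
    by_cases h : |b| < r
    · rw [if_pos ⟨h, hωpos⟩]
    · rw [if_neg (fun hc => h hc.1)]
      have : |b| = r := le_antisymm hble (not_lt.1 h)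
      rw [this]; ring
  rw [Finset.sum_congr rfl hite]
  -- partition
  set h : ℝ → ℝ := fun b => omega g b * (r - |b|) with hhdef
  set P1 := B.filter (fun b => 0 < b ∧ b < r) with hP1
  set P2 := B.filter (fun b => -r < b ∧ b < 0) with hP2
  set P0 := B.filter (fun b => b = 0) with hP0
  set p : ℝ → Prop := fun b => (0 < b ∧ b < r) ∨ (-r < b ∧ b < 0) ∨ b = 0 with hp
  set S := B.filter p with hS
  have hBS : ∑ b ∈ B, h b = ∑ b ∈ S, h b := by
    refine (Finset.sum_subset (Finset.filter_subset _ _) ?_).symm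
    intro b hbB hbS
    obtain ⟨hble, hωne⟩ := (hmemB b).1 hbB
    have hnp : ¬ p b := fun hpb => hbS (Finset.mem_filter.2 ⟨hbB, hpb⟩)
    rcases lt_trichotomy b 0 with hb0 | hb0 | hb0
    · have hbr : b ≤ -r := by
        by_contra hc
        exact hnp (Or.inr (Or.inl ⟨lt_of_not_ge hc, hb0⟩))
      have : |b| = r := le_antisymm hble (by rw [abs_of_neg hb0]; linarith)
      rw [hhdef]; simp [this]
    · exact absurd (Or.inr (Or.inr hb0)) hnp
    · have hbr : r ≤ b := by
        by_contra hc
        exact hnp (Or.inl ⟨hb0, lt_of_not_ge hc⟩)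
      have habs : |b| = r := le_antisymm hble (by rw [abs_of_pos hb0]; linarith)
      simp only [hhdef]; rw [habs]; ring
  have hsplit : ∑ b ∈ S, h b = ∑ b ∈ P1, h b + ∑ b ∈ P2, h b + ∑ b ∈ P0, h b := by
    rw [← Finset.sum_filter_add_sum_filter_not S (fun b => 0 < b ∧ b < r) h]
    have e1 : S.filter (fun b => 0 < b ∧ b < r) = P1 := by
      ext b; simp only [hS, hP1, Finset.mem_filter]; tauto
    rw [e1, ← Finset.sum_filter_add_sum_filter_not
      (S.filter (fun b => ¬(0 < b ∧ b < r))) (fun b => -r < b ∧ b < 0) h]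
    have e2 : (S.filter (fun b => ¬(0 < b ∧ b < r))).filter (fun b => -r < b ∧ b < 0) = P2 := by
      ext b
      simp only [hS, hP2, hp, Finset.mem_filter]
      constructor
      · rintro ⟨⟨⟨hB', _⟩, _⟩, h2⟩; exact ⟨hB', h2⟩
      · rintro ⟨hB', h2⟩
        refine ⟨⟨⟨hB', Or.inr (Or.inl h2)⟩, ?_⟩, h2⟩
        rintro ⟨hc, _⟩; linarith [h2.2]
    have e3 : (S.filter (fun b => ¬(0 < b ∧ b < r))).filter (fun b => ¬(-r < b ∧ b < 0)) = P0 := by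
      ext b
      simp only [hS, hP0, hp, Finset.mem_filter]
      constructor
      · rintro ⟨⟨⟨hB', hpb⟩, hn1⟩, hn2⟩
        rcases hpb with h' | h' | h'
        · exact absurd h' hn1
        · exact absurd h' hn2
        · exact ⟨hB', h'⟩
      · rintro ⟨hB', h0⟩
        subst h0
        exact ⟨⟨⟨hB', Or.inr (Or.inr rfl)⟩, by rintro ⟨hc, _⟩; linarith⟩,
          by rintro ⟨_, hc⟩; linarith⟩
    rw [e2, e3]
    ring
  -- compute each part
  have hchar1 : ∀ b : ℝ, b ∈ P1 ↔ (0 < b ∧ b < r ∧ omega g b ≠ 0) := by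
    intro b
    simp only [hP1, Finset.mem_filter, hmemB]
    constructor
    · rintro ⟨⟨_, hω⟩, h0, hr'⟩; exact ⟨h0, hr', hω⟩
    · rintro ⟨h0, hr', hω⟩
      exact ⟨⟨by rw [abs_of_pos h0]; exact hr'.le, hω⟩, h0, hr'⟩
  have hsum1 := sum_breaks hgm hr P1 hchar1
  have hsum1' : ∑ b ∈ P1, h b = g r - g 0 - sR g 0 * r := by
    have : ∑ b ∈ P1, h b = ∑ b ∈ P1, omega g b * (r - b) := by
      refine Finset.sum_congr rfl (fun b hb => ?_)
      simp only [hhdef]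
      rw [abs_of_pos ((hchar1 b).1 hb).1]
    rw [this]; rw [hsum1]; ring
  -- reflected side
  have hGm : IsTropMero (fun t => g (-t)) := mero_reflect hgm
  set P2' := P2.image (fun b => -b) with hP2'
  have hchar2 : ∀ b : ℝ, b ∈ P2' ↔ (0 < b ∧ b < r ∧ omega (fun t => g (-t)) b ≠ 0) := by
    intro b
    rw [hP2']
    simp only [Finset.mem_image]
    constructor
    · rintro ⟨c, hc, rfl⟩
      obtain ⟨hcB, hc1, hc2⟩ := Finset.mem_filter.1 hc
      obtain ⟨_, hω⟩ := (hmemB c).1 hcB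
      refine ⟨by linarith, by linarith, ?_⟩
      rw [omega_reflect hgm, neg_neg]; exact hω
    · rintro ⟨h0, hr', hω⟩
      rw [omega_reflect hgm] at hω
      refine ⟨-b, Finset.mem_filter.2 ⟨(hmemB (-b)).2 ⟨?_, hω⟩, by linarith, by linarith⟩, neg_neg b⟩
      rw [abs_of_neg (by linarith : -b < 0)]
      simpa using hr'.le
  have hsum2 := sum_breaks hGm hr P2' hchar2
  have hinj : ∀ x ∈ P2, ∀ y ∈ P2, -x = -y → x = y := by
    intro x _ y _ hxy; linarith
  have himg : ∑ b ∈ P2', omega (fun t => g (-t)) b * (r - b)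
      = ∑ b ∈ P2, h b := by
    rw [hP2', Finset.sum_image hinj]
    refine Finset.sum_congr rfl (fun b hb => ?_)
    obtain ⟨_, hb1, hb2⟩ := Finset.mem_filter.1 hb
    simp only [omega_reflect hgm, neg_neg, hhdef]
    rw [abs_of_neg hb2]
  have hsum2' : ∑ b ∈ P2, h b = g (-r) - g 0 + sL g 0 * r := by
    rw [← himg]
    have hsRG : sR (fun t => g (-t)) 0 = - sL g 0 := by
      rw [reflect_sR hgm]; simp
    rw [neg_zero, hsRG] at hsum2
    ring_nf at hsum2 ⊢
    linarith
  have hsum0 : ∑ b ∈ P0, h b = omega g 0 * r := by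
    by_cases h0 : omega g 0 = 0
    · have hP0e : P0 = ∅ := by
        refine Finset.eq_empty_iff_forall_notMem.2 (fun b hb => ?_)
        obtain ⟨hbB, hb0⟩ := Finset.mem_filter.1 hb
        exact ((hmemB b).1 hbB).2 (by rw [hb0]; exact h0)
      rw [hP0e, h0]; simp
    · have hP0s : P0 = {0} := by
        ext b
        simp only [hP0, Finset.mem_filter, Finset.mem_singleton]
        constructor
        · rintro ⟨_, hb⟩; exact hb
        · rintro rfl
          exact ⟨(hmemB 0).2 ⟨by rw [abs_zero]; linarith, h0⟩, rfl⟩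
      rw [hP0s, Finset.sum_singleton, hhdef]
      simp
  rw [hBS, hsplit, hsum1', hsum2', hsum0, omega_eq]
  ring

end TropAux
end
open Set Filter TropNev

noncomputable section
namespace TropAux

lemma coe_sup (a b : ℝ) : (((a ⊔ b : ℝ)) : EReal) = (a : EReal) ⊔ (b : EReal) := by
  rcases le_total a b with h | h
  · rw [max_eq_right h, max_eq_right (EReal.coe_le_coe_iff.2 h)]
  · rw [max_eq_left h, max_eq_left (EReal.coe_le_coe_iff.2 h)]

lemma compo_entire {n d : ℕ} (P : TropPoly n d) (f : Fin (n+1) → ℝ → ℝ)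
    (hf : ∀ k, IsTropEntire (f k)) : IsTropEntire (P.compo f) := by
  classical
  by_cases htop : ∃ s, P.coeff s = ⊤
  · have hcz : P.compo f = fun _ => 0 := by
      funext x
      obtain ⟨s, hs⟩ := htop
      have hterm : P.term s (fun k => f k x) = ⊤ := by
        rw [TropPoly.term, hs, EReal.top_add_coe]
      have heval : P.evalE (fun k => f k x) = ⊤ := by
        apply top_le_iff.1
        rw [TropPoly.evalE, ← hterm]
        exact Finset.le_sup (f := fun s => P.term s fun k => f k x) (Finset.mem_univ s)
      rw [TropPoly.compo]
      rw [heval]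
      exact EReal.toReal_top
    rw [hcz]
    exact entire_const 0
  · push_neg at htop
    obtain ⟨s0, hs0⟩ := P.nontriv
    set S := Finset.univ.filter (fun s => P.coeff s ≠ ⊥) with hSdef
    have hS : S.Nonempty := ⟨s0, Finset.mem_filter.2 ⟨Finset.mem_univ s0, hs0⟩⟩
    have hcompo : P.compo f = fun x => S.sup' hS (fun s => (P.coeff s).toReal
        + (Multiset.map (fun k => f k x) (s : Multiset (Fin (n+1)))).sum) := by
      funext x
      have h1 : P.evalE (fun k => f k x) = S.sup' hS (fun s => P.term s (fun k => f k x)) := by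
        rw [TropPoly.evalE, Finset.sup'_eq_sup]
        apply le_antisymm
        · apply Finset.sup_le
          intro s _
          by_cases hsb : P.coeff s = ⊥
          · rw [TropPoly.term, hsb, EReal.bot_add]
            exact bot_le
          · refine Finset.le_sup (f := fun s => P.term s fun k => f k x) ?_
            rw [hSdef, Finset.mem_filter]
            exact ⟨Finset.mem_univ s, hsb⟩
        · exact Finset.sup_mono (Finset.subset_univ S)
      have h2 : ∀ s ∈ S, P.term s (fun k => f k x)
          = ((((P.coeff s).toReal
            + (Multiset.map (fun k => f k x) (s : Multiset (Fin (n+1)))).sum : ℝ)) : EReal) := by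
        intro s hs
        have hsb : P.coeff s ≠ ⊥ := by
          rw [hSdef] at hs
          simpa using (Finset.mem_filter.1 hs).2
        rw [TropPoly.term, EReal.coe_add, EReal.coe_toReal (htop s) hsb]
      have h3 : S.sup' hS (fun s => P.term s (fun k => f k x))
          = S.sup' hS (fun s => ((((P.coeff s).toReal
            + (Multiset.map (fun k => f k x) (s : Multiset (Fin (n+1)))).sum : ℝ)) : EReal)) :=
        Finset.sup'_congr hS rfl h2
      have h4 := Finset.comp_sup'_eq_sup'_comp (γ := EReal) hS
        (f := fun s => ((P.coeff s).toReal
          + (Multiset.map (fun k => f k x) (s : Multiset (Fin (n+1)))).sum : ℝ))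
        (fun y : ℝ => (y : EReal)) coe_sup
      simp only [Function.comp] at h4
      rw [TropPoly.compo, h1, h3, ← h4]
      exact EReal.toReal_coe _
    rw [hcompo]
    apply entire_sup'
    intro s _
    exact entire_const_add _ (entire_msum hf _)

end TropAux
end

open TropNev Filter MeasureTheory Topology
/-- tropical first main theorem for hypersurfaces. -/
theorem stmt6 {n d : ℕ} (hd : 1 ≤ d) (f : Fin (n + 1) → ℝ → ℝ) (hf : IsTropCurve f)
    (P : TropPoly n d) (hP : ∃ t : ℝ, (fun k => f k t) ∉ P.hyp) :
    ∃ C : ℝ, ∀ᶠ r : ℝ in Filter.atTop,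
      |proxCurve f P r + countNroots (P.compo f) r - (d : ℝ) * curveT f r| ≤ C := by
  have hent : ∀ k, IsTropEntire (f k) := hf.1
  have hg : IsTropEntire (P.compo f) := TropAux.compo_entire P f hent
  refine ⟨|(d : ℝ) * P.coeffNorm + (d : ℝ) * tmax (fun k => f k 0) - P.compo f 0|, ?_⟩
  filter_upwards [eventually_ge_atTop 1] with r hr1
  have hr : (0:ℝ) < r := by linarith
  have hj := TropAux.jensen hg hr
  have key : proxCurve f P r + countNroots (P.compo f) r - (d : ℝ) * curveT f r
      = (d : ℝ) * P.coeffNorm + (d : ℝ) * tmax (fun k => f k 0) - P.compo f 0 := by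
    rw [hj]
    simp only [proxCurve, weil, curveT]
    ring
  rw [key]
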